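/- The set of gradients Df(x), as f ranges over all functions ℝⁿ → ℝ differentiable at x with max over A attained at x, equals the normal cone Nor(A,x) = {w : ⟨w, v⟩ ≤ 0 for all v ∈ Tan⁺(A,x)}. -/

import Mathlib

open Filter Metric Topology RealInnerProductSpace

/-- Upper tangent cone (sequential description). -/
def upperTangentCone {n : ℕ} (A : Set (EuclideanSpace ℝ (Fin n)))
    (x : EuclideanSpace ℝ (Fin n)) : Set (EuclideanSpace ℝ (Fin n)) :=
  {v | ∃ (lam : ℕ → ℝ) (u : ℕ → EuclideanSpace ℝ (Fin n)),
      (∀ k, 0 < lam k) ∧ Filter.Tendsto lam Filter.atTop (𝓝 0) ∧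
      (∀ k, u k ∈ A) ∧ Filter.Tendsto u Filter.atTop (𝓝 x) ∧
      Filter.Tendsto (fun k => (lam k)⁻¹ • (u k - x)) Filter.atTop (𝓝 v)}

lemma aux_forward {n : ℕ} {A : Set (EuclideanSpace ℝ (Fin n))}
    {x : EuclideanSpace ℝ (Fin n)} {f : EuclideanSpace ℝ (Fin n) → ℝ}
    {Df : EuclideanSpace ℝ (Fin n) →L[ℝ] ℝ} (hDf : HasFDerivAt f Df x)
    (hmax : ∀ y ∈ A, f y ≤ f x) {v : EuclideanSpace ℝ (Fin n)}
    (hv : v ∈ upperTangentCone A x) : Df v ≤ 0 := by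
  obtain ⟨lam, u, hlam, hlam0, huA, hux, hvk⟩ := hv
  have hO : (fun k => u k - x) =O[atTop] lam := by
    rw [Asymptotics.isBigO_iff]
    refine ⟨‖v‖ + 1, ?_⟩
    have h1 : Tendsto (fun k => ‖(lam k)⁻¹ • (u k - x)‖) atTop (𝓝 ‖v‖) := hvk.norm
    have h2 : ∀ᶠ k in atTop, ‖(lam k)⁻¹ • (u k - x)‖ ≤ ‖v‖ + 1 :=
      h1.eventually (eventually_le_nhds (lt_add_one ‖v‖))
    filter_upwards [h2] with k hk
    have hnorm : ‖(lam k)⁻¹ • (u k - x)‖ = (lam k)⁻¹ * ‖u k - x‖ := by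
      rw [norm_smul, Real.norm_eq_abs, abs_of_pos (inv_pos.2 (hlam k))]
    rw [hnorm] at hk
    have hl := hlam k
    rw [Real.norm_eq_abs, abs_of_pos hl]
    calc ‖u k - x‖ = lam k * ((lam k)⁻¹ * ‖u k - x‖) := by field_simp
      _ ≤ lam k * (‖v‖ + 1) := by nlinarith
      _ = (‖v‖ + 1) * lam k := by ring
  have hlitt := (hDf.isLittleO.comp_tendsto hux).trans_isBigO hO
  have h2 : Tendsto (fun k => (f (u k) - f x - Df (u k - x)) / lam k) atTop (𝓝 0) :=
    hlitt.tendsto_div_nhds_zero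
  have h3 : Tendsto (fun k => Df ((lam k)⁻¹ • (u k - x))) atTop (𝓝 (Df v)) :=
    (Df.continuous.tendsto v).comp hvk
  have h4 : Tendsto (fun k => (f (u k) - f x) / lam k) atTop (𝓝 (Df v)) := by
    have h5 := h2.add h3
    rw [zero_add] at h5
    convert h5 using 2 with k
    rw [map_smul, smul_eq_mul]
    have := (hlam k).ne'
    field_simp
    ring
  refine le_of_tendsto h4 (Eventually.of_forall fun k => ?_)
  exact div_nonpos_of_nonpos_of_nonneg (by linarith [hmax (u k) (huA k)]) (hlam k).le

lemma aux_backward {n : ℕ} {A : Set (EuclideanSpace ℝ (Fin n))}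
    {x : EuclideanSpace ℝ (Fin n)} (hx : x ∈ A) {w : EuclideanSpace ℝ (Fin n)}
    (hw : ∀ v ∈ upperTangentCone A x, ⟪w, v⟫ ≤ 0) :
    ∃ (f : EuclideanSpace ℝ (Fin n) → ℝ) (Df : EuclideanSpace ℝ (Fin n) →L[ℝ] ℝ),
      HasFDerivAt f Df x ∧ (∀ y ∈ A, f y ≤ f x) ∧ ∀ v, Df v = ⟪w, v⟫ := by
  set φ : EuclideanSpace ℝ (Fin n) → ℝ := fun y => max (⟪w, y - x⟫) 0 with hφdef
  set g : ℝ → ℝ := fun r => sSup (φ '' (A ∩ Metric.closedBall x r)) with hgdef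
  have hφx : φ x = 0 := by simp [hφdef]
  have hmemx : ∀ r, 0 ≤ r → φ x ∈ φ '' (A ∩ closedBall x r) := fun r hr =>
    ⟨x, ⟨hx, mem_closedBall_self hr⟩, rfl⟩
  have hbdd : ∀ r, BddAbove (φ '' (A ∩ closedBall x r)) := by
    intro r
    refine ⟨max (‖w‖ * r) 0, ?_⟩
    rintro _ ⟨y, ⟨-, hy⟩, rfl⟩
    rw [mem_closedBall, dist_eq_norm] at hy
    have h1 : ⟪w, y - x⟫ ≤ ‖w‖ * r :=
      le_trans (real_inner_le_norm w (y - x)) (by nlinarith [norm_nonneg w])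
    exact max_le_max h1 le_rfl
  have hg0 : ∀ r, 0 ≤ r → 0 ≤ g r := fun r hr => by
    have := le_csSup (hbdd r) (hmemx r hr)
    rwa [hφx] at this
  have hgzero : g 0 = 0 := by
    refine le_antisymm ?_ (hg0 0 le_rfl)
    refine csSup_le ⟨φ x, hmemx 0 le_rfl⟩ ?_
    rintro _ ⟨y, ⟨-, hy⟩, rfl⟩
    rw [mem_closedBall, dist_le_zero] at hy
    simp [hφdef, hy]
  have hgin : ∀ y ∈ A, ⟪w, y - x⟫ ≤ g ‖y - x‖ := by
    intro y hy
    have hm : φ y ∈ φ '' (A ∩ closedBall x ‖y - x‖) :=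
      ⟨y, ⟨hy, by rw [mem_closedBall, dist_eq_norm]⟩, rfl⟩
    exact le_trans (le_max_left _ _) (le_csSup (hbdd _) hm)
  have key : ∀ ε > (0:ℝ), ∃ δ > (0:ℝ), ∀ r, 0 ≤ r → r ≤ δ → g r ≤ ε * r := by
    by_contra hcon
    push_neg at hcon
    obtain ⟨ε, hε, hcon⟩ := hcon
    choose r hr0 hrle hrg using fun k : ℕ => hcon ((k + 1 : ℝ)⁻¹) (by positivity)
    have hy : ∀ k, ∃ y, (y ∈ A ∧ y ∈ closedBall x (r k)) ∧ ε * r k < φ y := by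
      intro k
      obtain ⟨b, hb, hbgt⟩ := exists_lt_of_lt_csSup ⟨φ x, hmemx _ (hr0 k)⟩ (hrg k)
      obtain ⟨y, hy, rfl⟩ := hb
      exact ⟨y, hy, hbgt⟩
    choose y hyA hygt using hy
    have hynorm : ∀ k, ‖y k - x‖ ≤ r k := by
      intro k
      have := (hyA k).2
      rwa [mem_closedBall, dist_eq_norm] at this
    have hinner : ∀ k, ε * ‖y k - x‖ < ⟪w, y k - x⟫ := by
      intro k
      have h1 : (0:ℝ) ≤ ε * r k := mul_nonneg hε.le (hr0 k)
      have h2 : ε * r k < ⟪w, y k - x⟫ := by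
        rcases lt_max_iff.mp (hygt k) with h | h
        · exact h
        · linarith
      nlinarith [hynorm k]
    have hne : ∀ k, 0 < ‖y k - x‖ := by
      intro k
      rcases (norm_nonneg (y k - x)).lt_or_eq with h | h
      · exact h
      · exfalso
        have hy0 : y k - x = 0 := by rwa [eq_comm, norm_eq_zero] at h
        have := hinner k
        rw [hy0] at this
        simp at this
    set lam : ℕ → ℝ := fun k => ‖y k - x‖ with hlamdef
    set vk : ℕ → EuclideanSpace ℝ (Fin n) := fun k => (lam k)⁻¹ • (y k - x) with hvkdef
    have hvk1 : ∀ k, vk k ∈ Metric.sphere (0 : EuclideanSpace ℝ (Fin n)) 1 := by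
      intro k
      simp only [mem_sphere_iff_norm, sub_zero, hvkdef, norm_smul, Real.norm_eq_abs,
        abs_of_pos (inv_pos.2 (hne k))]
      rw [abs_of_pos (inv_pos.2 (hne k) : 0 < (lam k)⁻¹)]
      exact inv_mul_cancel₀ (hne k).ne'
    obtain ⟨v, -, ψ, hψ, hconv⟩ :=
      (isCompact_sphere (0 : EuclideanSpace ℝ (Fin n)) 1).tendsto_subseq hvk1
    have hlam0 : Tendsto lam atTop (𝓝 0) := by
      refine squeeze_zero (fun k => (hne k).le) (fun k => le_trans (hynorm k) (hrle k)) ?_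
      have : Tendsto (fun k : ℕ => 1 / ((k : ℝ) + 1)) atTop (𝓝 0) :=
        tendsto_one_div_add_atTop_nhds_zero_nat
      simpa [one_div] using this
    have hyx : Tendsto (y ∘ ψ) atTop (𝓝 x) := by
      have : Tendsto y atTop (𝓝 x) := by
        rw [tendsto_iff_norm_sub_tendsto_zero]
        exact hlam0
      exact this.comp hψ.tendsto_atTop
    have hmem : v ∈ upperTangentCone A x :=
      ⟨lam ∘ ψ, y ∘ ψ, fun k => hne _, hlam0.comp hψ.tendsto_atTop,
        fun k => (hyA _).1, hyx, hconv⟩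
    have hεv : ε ≤ ⟪w, v⟫ := by
      have hc : Tendsto (fun k => ⟪w, vk (ψ k)⟫) atTop (𝓝 ⟪w, v⟫) :=
        ((continuous_const.inner continuous_id).tendsto v).comp hconv
      refine le_of_tendsto_of_tendsto' tendsto_const_nhds hc fun k => ?_
      have h1 := hinner (ψ k)
      have h2 := hne (ψ k)
      rw [hvkdef]
      simp only [real_inner_smul_right]
      rw [le_inv_mul_iff₀ h2]
      calc lam (ψ k) * ε = ε * ‖y (ψ k) - x‖ := by rw [hlamdef]; ring
        _ ≤ ⟪w, y (ψ k) - x⟫ := (h1).le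
    linarith [hw v hmem]
  -- construct f
  refine ⟨fun y => ⟪w, y - x⟫ - g ‖y - x‖, innerSL ℝ w, ?_, ?_, fun v => by simp⟩
  · rw [hasFDerivAt_iff_isLittleO_nhds_zero, Asymptotics.isLittleO_iff]
    intro c hc
    obtain ⟨δ, hδ, hδ'⟩ := key c hc
    filter_upwards [Metric.ball_mem_nhds (0 : EuclideanSpace ℝ (Fin n)) hδ] with z hz
    rw [mem_ball_zero_iff] at hz
    have hgle := hδ' ‖z‖ (norm_nonneg _) hz.le
    have hgnn := hg0 ‖z‖ (norm_nonneg _)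
    have heq : (⟪w, x + z - x⟫ - g ‖x + z - x‖) - (⟪w, x - x⟫ - g ‖x - x‖)
        - innerSL ℝ w z = -g ‖z‖ := by
      simp only [add_sub_cancel_left, sub_self, norm_zero, hgzero, innerSL_apply_apply,
        inner_zero_right]
      ring
    show ‖(⟪w, x + z - x⟫ - g ‖x + z - x‖) - (⟪w, x - x⟫ - g ‖x - x‖)
        - innerSL ℝ w z‖ ≤ c * ‖z‖
    rw [heq, Real.norm_eq_abs, abs_of_nonpos (by linarith), neg_neg]
    exact hgle
  · intro y hy
    have h1 := hgin y hy
    have h2 : ⟪w, x - x⟫ - g ‖x - x‖ = 0 := by simp [hgzero]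
    show ⟪w, y - x⟫ - g ‖y - x‖ ≤ ⟪w, x - x⟫ - g ‖x - x‖
    rw [h2]
    linarith

/-- The gradients of functions differentiable at `x` and maximized over `A` at `x`
form exactly the normal cone of `A` at `x`. -/
theorem gradients_eq_normalCone {n : ℕ} (A : Set (EuclideanSpace ℝ (Fin n)))
    (x : EuclideanSpace ℝ (Fin n)) (hx : x ∈ A) :
    {w : EuclideanSpace ℝ (Fin n) |
        ∃ (f : EuclideanSpace ℝ (Fin n) → ℝ) (Df : EuclideanSpace ℝ (Fin n) →L[ℝ] ℝ),
          HasFDerivAt f Df x ∧ (∀ y ∈ A, f y ≤ f x) ∧ ∀ v, Df v = ⟪w, v⟫}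
      = {w : EuclideanSpace ℝ (Fin n) | ∀ v ∈ upperTangentCone A x, ⟪w, v⟫ ≤ 0} := by
  ext w
  simp only [Set.mem_setOf_eq]
  constructor
  · rintro ⟨f, Df, hDf, hmax, hDfw⟩ v hv
    rw [← hDfw v]
    exact aux_forward hDf hmax hv
  · exact aux_backward hx
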